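/- Let K be a field and R = K[x,y,z]. Let J = (x^3, x^2z, xz^2, yz^3) ⊆ R. Then Ass(R/J^s) = {(x,y), (x,z)} for every integer s ≥ 1; in particular, J is normally torsion-free. -/

import Mathlib

open MvPolynomial

namespace NTFAux

variable {K : Type*} [Field K]

local notation "R" => MvPolynomial (Fin 3) K











lemma X_eq_monomial (k : Fin 3) : (X k : R) = monomial (Finsupp.single k 1) 1 := by
  rw [← pow_one (X k : R), X_pow_eq_monomial]

lemma exists_add_of_mem_support_mul {f g : R} {e : Fin 3 →₀ ℕ}
    (he : e ∈ (f * g).support) :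
    ∃ a ∈ f.support, ∃ b ∈ g.support, a + b = e := by
  classical
  have h := MvPolynomial.support_mul f g he
  simpa [Finset.mem_add] using h

/-- forward characterization, base case -/
lemma one_le_of_mem_span_pair {i j : Fin 3} (hij : i ≠ j) {f : R}
    (hf : f ∈ Ideal.span {(X i : R), X j}) :
    ∀ e ∈ f.support, 1 ≤ e i + e j := by
  classical
  induction hf using Submodule.span_induction with
  | mem x hx =>
    intro e he
    rcases hx with rfl | rfl
    · rw [X_eq_monomial, support_monomial, if_neg one_ne_zero] at he
      simp only [Finset.mem_singleton] at he
      subst he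
      simp [Finsupp.single_apply]
    · rw [X_eq_monomial, support_monomial, if_neg one_ne_zero] at he
      simp only [Finset.mem_singleton] at he
      subst he
      simp [Finsupp.single_apply, hij]
  | zero => intro e he; simp at he
  | add x y hx hy ihx ihy =>
    intro e he
    rcases Finset.mem_union.mp (MvPolynomial.support_add he) with h | h
    · exact ihx e h
    · exact ihy e h
  | smul a x hx ih =>
    intro e he
    rw [smul_eq_mul] at he
    obtain ⟨p, _, q, hq, rfl⟩ := exists_add_of_mem_support_mul he
    have := ih q hq
    simp only [Finsupp.add_apply]
    omega

lemma forall_of_mem_span_pair_pow {i j : Fin 3} (hij : i ≠ j) :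
    ∀ (t : ℕ) (f : R), f ∈ (Ideal.span {(X i : R), X j}) ^ t →
      ∀ e ∈ f.support, t ≤ e i + e j := by
  intro t
  induction t with
  | zero => intro f _ e _; omega
  | succ t ih =>
    intro f hf
    rw [pow_succ] at hf
    refine Submodule.mul_induction_on hf ?_ ?_
    · intro p hp q hq e he
      obtain ⟨a, ha, b, hb, rfl⟩ := exists_add_of_mem_support_mul he
      have h1 := ih p hp a ha
      have h2 := one_le_of_mem_span_pair hij hq b hb
      simp only [Finsupp.add_apply]
      omega
    · intro x y hx hy e he
      rcases Finset.mem_union.mp (MvPolynomial.support_add he) with h | h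
      · exact hx e h
      · exact hy e h

lemma mem_span_pair_pow_of_forall {i j : Fin 3} (hij : i ≠ j) :
    ∀ (t : ℕ) (f : R), (∀ e ∈ f.support, t ≤ e i + e j) →
      f ∈ (Ideal.span {(X i : R), X j}) ^ t := by
  intro t
  induction t with
  | zero => intro f _; simp
  | succ t ih =>
    intro f hf
    classical
    rw [f.as_sum]
    apply Ideal.sum_mem
    intro v hv
    have hc : coeff v f ≠ 0 := mem_support_iff.mp hv
    have hcond := hf v hv
    -- pick k with v k ≥ 1
    have hk : 1 ≤ v i ∨ 1 ≤ v j := by omega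
    have key : ∀ k : Fin 3, (k = i ∨ k = j) → 1 ≤ v k →
        monomial v (coeff v f) ∈ (Ideal.span {(X i : R), X j}) ^ (t + 1) := by
      intro k hk hvk
      have hsub : Finsupp.single k 1 + (v - Finsupp.single k 1) = v := by
        ext m
        simp only [Finsupp.add_apply, Finsupp.tsub_apply, Finsupp.single_apply]
        by_cases hm : k = m
        · subst hm; simp; omega
        · simp [hm]
      have heq : monomial v (coeff v f)
          = X k * monomial (v - Finsupp.single k 1) (coeff v f) := by
        rw [X_eq_monomial, monomial_mul, one_mul, hsub]
      rw [heq, pow_succ']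
      apply Ideal.mul_mem_mul
      · apply Ideal.subset_span
        rcases hk with rfl | rfl
        · exact Or.inl rfl
        · exact Or.inr rfl
      · apply ih
        intro e he
        rw [support_monomial, if_neg hc, Finset.mem_singleton] at he
        subst he
        simp only [Finsupp.tsub_apply, Finsupp.single_apply]
        rcases hk with rfl | rfl
        · simp [hij]; omega
        · simp [hij, Ne.symm hij]; omega
    rcases hk with h | h
    · exact key i (Or.inl rfl) h
    · exact key j (Or.inr rfl) h

lemma mem_span_pair_pow_iff {i j : Fin 3} (hij : i ≠ j) (t : ℕ) (f : R) :
    f ∈ (Ideal.span {(X i : R), X j}) ^ t ↔ ∀ e ∈ f.support, t ≤ e i + e j :=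
  ⟨forall_of_mem_span_pair_pow hij t f, mem_span_pair_pow_of_forall hij t f⟩






/-- the part of `f` of `(i,j)`-weight exactly `n` -/
noncomputable def piComp (i j : Fin 3) (n : ℕ) (f : R) : R :=
  ∑ e ∈ f.support.filter (fun e => e i + e j = n), monomial e (coeff e f)

lemma coeff_piComp (i j : Fin 3) (n : ℕ) (f : R) (d : Fin 3 →₀ ℕ) :
    coeff d (piComp i j n f) = if d i + d j = n then coeff d f else 0 := by
  classical
  rw [piComp, MvPolynomial.coeff_sum]
  simp only [coeff_monomial]
  rw [Finset.sum_ite_eq' _ d (fun e => coeff e f)]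
  by_cases hd : d i + d j = n
  · rw [if_pos hd]
    by_cases hs : d ∈ f.support
    · rw [if_pos (Finset.mem_filter.mpr ⟨hs, hd⟩)]
    · rw [if_neg (fun h => hs (Finset.mem_filter.mp h).1), notMem_support_iff.mp hs]
  · rw [if_neg hd, if_neg]
    intro h
    exact hd (Finset.mem_filter.mp h).2

lemma piComp_mul {i j : Fin 3} {f g : R} {m n : ℕ}
    (hf : ∀ e ∈ f.support, m ≤ e i + e j) (hg : ∀ e ∈ g.support, n ≤ e i + e j) :
    piComp i j (m + n) (f * g) = piComp i j m f * piComp i j n g := by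
  classical
  apply MvPolynomial.ext
  intro d
  rw [coeff_piComp, MvPolynomial.coeff_mul, MvPolynomial.coeff_mul]
  have hterm : ∀ pq : (Fin 3 →₀ ℕ) × (Fin 3 →₀ ℕ),
      coeff pq.1 (piComp i j m f) * coeff pq.2 (piComp i j n g)
      = if pq.1 i + pq.1 j = m ∧ pq.2 i + pq.2 j = n
          then coeff pq.1 f * coeff pq.2 g else 0 := by
    intro pq
    rw [coeff_piComp, coeff_piComp]
    by_cases h1 : pq.1 i + pq.1 j = m
    · by_cases h2 : pq.2 i + pq.2 j = n
      · rw [if_pos h1, if_pos h2, if_pos ⟨h1, h2⟩]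
      · rw [if_pos h1, if_neg h2, mul_zero, if_neg]
        rintro ⟨-, hh⟩
        exact h2 hh
    · rw [if_neg h1, zero_mul, if_neg]
      rintro ⟨hh, -⟩
      exact h1 hh
  by_cases hd : d i + d j = m + n
  · rw [if_pos hd]
    apply Finset.sum_congr rfl
    intro pq hpq
    rw [Finset.HasAntidiagonal.mem_antidiagonal] at hpq
    have hw : pq.1 i + pq.1 j + (pq.2 i + pq.2 j) = m + n := by
      have h1 : pq.1 i + pq.2 i = d i := by rw [← hpq]; simp [Finsupp.add_apply]
      have h2 : pq.1 j + pq.2 j = d j := by rw [← hpq]; simp [Finsupp.add_apply]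
      omega
    rw [hterm pq]
    by_cases h1 : pq.1 i + pq.1 j = m
    · rw [if_pos ⟨h1, by omega⟩]
    · rw [if_neg (fun h : _ ∧ _ => h1 h.1)]
      -- one of the coeffs vanishes
      by_cases hsf : pq.1 ∈ f.support
      · have hm1 := hf _ hsf
        have h2 : pq.2 ∉ g.support := fun hs => by have := hg _ hs; omega
        rw [notMem_support_iff.mp h2, mul_zero]
      · rw [notMem_support_iff.mp hsf, zero_mul]
  · rw [if_neg hd]
    symm
    apply Finset.sum_eq_zero
    intro pq hpq
    rw [Finset.HasAntidiagonal.mem_antidiagonal] at hpq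
    rw [hterm pq]
    have hw1 : pq.1 i + pq.2 i = d i := by rw [← hpq]; simp [Finsupp.add_apply]
    have hw2 : pq.1 j + pq.2 j = d j := by rw [← hpq]; simp [Finsupp.add_apply]
    rw [if_neg]
    rintro ⟨h1, h2⟩
    omega

lemma exists_min_weight {i j : Fin 3} {f : R} (hf : f ≠ 0) :
    ∃ t, (∀ e ∈ f.support, t ≤ e i + e j) ∧ piComp i j t f ≠ 0 := by
  classical
  have hne : f.support.Nonempty := MvPolynomial.support_nonempty.mpr hf
  have hne' : (f.support.image (fun e => e i + e j)).Nonempty := hne.image _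
  refine ⟨(f.support.image (fun e => e i + e j)).min' hne', ?_, ?_⟩
  · intro e he
    exact Finset.min'_le _ _ (Finset.mem_image_of_mem _ he)
  · obtain ⟨e0, he0, he0w⟩ := Finset.mem_image.mp
      ((f.support.image (fun e => e i + e j)).min'_mem hne')
    intro hzero
    have := coeff_piComp i j ((f.support.image (fun e => e i + e j)).min' hne') f e0
    rw [hzero, if_pos he0w] at this
    exact mem_support_iff.mp he0 this.symm










lemma zero_weight_of_not_mem_span_pair {i j : Fin 3} (hij : i ≠ j) {f : R}
    (hf : f ∉ Ideal.span {(X i : R), X j}) :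
    f ≠ 0 ∧ piComp i j 0 f ≠ 0 ∧ (∀ e ∈ f.support, (0:ℕ) ≤ e i + e j) := by
  have hf0 : f ≠ 0 := fun h => hf (h ▸ Ideal.zero_mem _)
  obtain ⟨t, htb, htn⟩ := exists_min_weight (i := i) (j := j) hf0
  have hex : ∃ e ∈ f.support, e i + e j = 0 := by
    by_contra hcon
    push_neg at hcon
    apply hf
    have := mem_span_pair_pow_of_forall hij 1 f (fun e he => by have := hcon e he; omega)
    simpa using this
  obtain ⟨e, he, hew⟩ := hex
  have ht0 : t = 0 := by have := htb e he; omega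
  subst ht0
  exact ⟨hf0, htn, fun e _ => Nat.zero_le _⟩

lemma span_pair_isPrime {i j : Fin 3} (hij : i ≠ j) :
    (Ideal.span {(X i : R), X j}).IsPrime := by
  constructor
  · intro htop
    have h1 : (1 : R) ∈ Ideal.span {(X i : R), X j} := htop ▸ Submodule.mem_top
    have := one_le_of_mem_span_pair hij h1 0 (by
      rw [mem_support_iff]
      simp)
    simp at this
  · intro f g hfg
    by_contra hcon
    push_neg at hcon
    obtain ⟨hf, hg⟩ := hcon
    obtain ⟨hf0, hfp, hfb⟩ := zero_weight_of_not_mem_span_pair hij hf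
    obtain ⟨hg0, hgp, hgb⟩ := zero_weight_of_not_mem_span_pair hij hg
    have hmul : piComp i j 0 (f * g) = piComp i j 0 f * piComp i j 0 g := by
      have := piComp_mul (i := i) (j := j) (m := 0) (n := 0) hfb hgb
      simpa using this
    have hne : piComp i j 0 (f * g) ≠ 0 := by
      rw [hmul]; exact mul_ne_zero hfp hgp
    obtain ⟨d, hd⟩ := MvPolynomial.ne_zero_iff.mp hne
    rw [coeff_piComp] at hd
    by_cases hdw : d i + d j = 0
    · rw [if_pos hdw] at hd
      have hds : d ∈ (f * g).support := mem_support_iff.mpr hd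
      have := one_le_of_mem_span_pair hij hfg d hds
      omega
    · rw [if_neg hdw] at hd
      exact hd rfl

lemma colon_span_pair_pow {i j : Fin 3} (hij : i ≠ j) {s : ℕ} (hs : 1 ≤ s) {g : R}
    (hg : g ∉ (Ideal.span {(X i : R), X j}) ^ s) {Q : Ideal R} (hQ : Q.IsPrime)
    (hQg : ∀ r : R, r ∈ Q ↔ r * g ∈ (Ideal.span {(X i : R), X j}) ^ s) :
    Q = Ideal.span {(X i : R), X j} := by
  apply le_antisymm
  · intro h hh
    by_contra hP
    obtain ⟨hh0, hhp, hhb⟩ := zero_weight_of_not_mem_span_pair hij hP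
    have hg0 : g ≠ 0 := fun hz => hg (hz ▸ Ideal.zero_mem _)
    obtain ⟨t, htb, htn⟩ := exists_min_weight (i := i) (j := j) hg0
    have hts : t < s := by
      by_contra hcon
      push_neg at hcon
      exact hg (mem_span_pair_pow_of_forall hij s g (fun e he => le_trans hcon (htb e he)))
    have hmem : h * g ∈ (Ideal.span {(X i : R), X j}) ^ s := (hQg h).mp hh
    have hmul : piComp i j t (h * g) = piComp i j 0 h * piComp i j t g := by
      have := piComp_mul (i := i) (j := j) (m := 0) (n := t) hhb htb
      simpa using this
    have hne : piComp i j t (h * g) ≠ 0 := by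
      rw [hmul]; exact mul_ne_zero hhp htn
    obtain ⟨d, hd⟩ := MvPolynomial.ne_zero_iff.mp hne
    rw [coeff_piComp] at hd
    by_cases hdw : d i + d j = t
    · rw [if_pos hdw] at hd
      have hds : d ∈ (h * g).support := mem_support_iff.mpr hd
      have := forall_of_mem_span_pair_pow hij s _ hmem d hds
      omega
    · rw [if_neg hdw] at hd
      exact hd rfl
  · rw [Ideal.span_le]
    rintro x hx
    have hxP : x ∈ Ideal.span {(X i : R), X j} := Ideal.subset_span hx
    have hxs : x ^ s ∈ (Ideal.span {(X i : R), X j}) ^ s := Ideal.pow_mem_pow hxP s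
    have : x ^ s ∈ Q := (hQg _).mpr (Ideal.mul_mem_right _ _ hxs)
    exact hQ.mem_of_pow_mem _ this


noncomputable def Jdl (K : Type*) [Field K] : Ideal (MvPolynomial (Fin 3) K) :=
  Ideal.span {(X 0 : MvPolynomial (Fin 3) K) ^ 3, X 0 ^ 2 * X 2, X 0 * X 2 ^ 2, X 1 * X 2 ^ 3}

lemma gen1_eq : (X 0 : R) ^ 3 = monomial (Finsupp.single 0 3) 1 := X_pow_eq_monomial
lemma gen2_eq : (X 0 : R) ^ 2 * X 2
    = monomial (Finsupp.single 0 2 + Finsupp.single 2 1) 1 := by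
  rw [X_pow_eq_monomial, X_eq_monomial, monomial_mul, one_mul]
lemma gen3_eq : (X 0 : R) * X 2 ^ 2
    = monomial (Finsupp.single 0 1 + Finsupp.single 2 2) 1 := by
  rw [X_pow_eq_monomial, X_eq_monomial, monomial_mul, one_mul]
lemma gen4_eq : (X 1 : R) * X 2 ^ 3
    = monomial (Finsupp.single 1 1 + Finsupp.single 2 3) 1 := by
  rw [X_pow_eq_monomial, X_eq_monomial, monomial_mul, one_mul]

lemma forall_of_mem_Jdl_pow (s : ℕ) (f : R) (hf : f ∈ (Jdl K) ^ s) :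
    ∀ e ∈ f.support, s ≤ e 0 + e 1 ∧ 3 * s ≤ e 0 + e 2 := by
  have hJA : Jdl K ≤ Ideal.span {(X 0 : R), X 1} := by
    rw [Jdl, Ideal.span_le]
    rintro x hx
    have h0 : (X 0 : R) ∈ Ideal.span {(X 0 : R), X 1} :=
      Ideal.subset_span (Or.inl rfl)
    have h1 : (X 1 : R) ∈ Ideal.span {(X 0 : R), X 1} :=
      Ideal.subset_span (Or.inr rfl)
    simp only [Set.mem_insert_iff, Set.mem_singleton_iff] at hx
    rcases hx with rfl | rfl | rfl | rfl
    · exact Ideal.pow_mem_of_mem _ h0 3 (by norm_num)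
    · exact Ideal.mul_mem_right _ _ (Ideal.pow_mem_of_mem _ h0 2 (by norm_num))
    · exact Ideal.mul_mem_right _ _ h0
    · exact Ideal.mul_mem_right _ _ h1
  have hpow : ∀ (I : Ideal R) (n : ℕ), Jdl K ≤ I → (Jdl K) ^ n ≤ I ^ n := by
    intro I n hI
    induction n with
    | zero => simp
    | succ n ih => rw [pow_succ, pow_succ]; exact Ideal.mul_mono ih hI
  have hJB : Jdl K ≤ (Ideal.span {(X 0 : R), X 2}) ^ 3 := by
    rw [Jdl, Ideal.span_le]
    rintro x hx
    simp only [Set.mem_insert_iff, Set.mem_singleton_iff] at hx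
    rcases hx with rfl | rfl | rfl | rfl <;>
    · classical
      apply mem_span_pair_pow_of_forall (by decide) 3
      first
        | rw [gen1_eq] | rw [gen2_eq] | rw [gen3_eq] | rw [gen4_eq]
      intro e he
      rw [support_monomial, if_neg one_ne_zero, Finset.mem_singleton] at he
      subst he
      simp [Finsupp.single_apply, Finsupp.add_apply]
  intro e he
  constructor
  · have hA : f ∈ (Ideal.span {(X 0 : R), X 1}) ^ s := hpow _ s hJA hf
    exact forall_of_mem_span_pair_pow (by decide) s f hA e he
  · have hB : f ∈ ((Ideal.span {(X 0 : R), X 2}) ^ 3) ^ s := hpow _ s hJB hf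
    rw [← pow_mul] at hB
    exact forall_of_mem_span_pair_pow (by decide) (3 * s) f hB e he

lemma mem_Jdl_pow_of_forall (s : ℕ) (f : R)
    (hf : ∀ e ∈ f.support, s ≤ e 0 + e 1 ∧ 3 * s ≤ e 0 + e 2) :
    f ∈ (Jdl K) ^ s := by
  classical
  induction s generalizing f with
  | zero => simp
  | succ s ih =>
    rw [f.as_sum]
    apply Ideal.sum_mem
    intro v hv
    have hc : coeff v f ≠ 0 := mem_support_iff.mp hv
    obtain ⟨hc1, hc2⟩ := hf v hv
    have key : ∀ g : Fin 3 →₀ ℕ, monomial g (1:K) ∈ Jdl K →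
        (∀ k, g k ≤ v k) →
        (s ≤ (v 0 - g 0) + (v 1 - g 1)) → (3 * s ≤ (v 0 - g 0) + (v 2 - g 2)) →
        monomial v (coeff v f) ∈ (Jdl K) ^ (s + 1) := by
      intro g hgJ hgle hr1 hr2
      have hsub : g + (v - g) = v := by
        ext m
        simp only [Finsupp.add_apply, Finsupp.tsub_apply]
        have := hgle m
        omega
      have heq : monomial v (coeff v f) = monomial g (1:K) * monomial (v - g) (coeff v f) := by
        rw [monomial_mul, one_mul, hsub]
      rw [heq, pow_succ']
      apply Ideal.mul_mem_mul hgJ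
      apply ih
      intro e he
      rw [support_monomial, if_neg hc, Finset.mem_singleton] at he
      subst he
      simp only [Finsupp.tsub_apply]
      exact ⟨hr1, hr2⟩
    by_cases h0 : v 0 = 0
    · -- use generator y z^3
      apply key (Finsupp.single 1 1 + Finsupp.single 2 3)
      · rw [← gen4_eq]; exact Ideal.subset_span (by simp)
      · intro k
        fin_cases k <;> simp [Finsupp.single_apply, Finsupp.add_apply] <;> omega
      · simp [Finsupp.single_apply, Finsupp.add_apply]; omega
      · simp [Finsupp.single_apply, Finsupp.add_apply]; omega
    · -- v 0 ≥ 1 : use x^t z^(3-t)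
      have h0' : 1 ≤ v 0 := by omega
      set t := min 3 (min (v 0) (v 0 + v 1 - s)) with ht
      have ht3 : t ≤ 3 := min_le_left _ _
      have hte0 : t ≤ v 0 := le_trans (min_le_right _ _) (min_le_left _ _)
      have hts : t ≤ v 0 + v 1 - s := le_trans (min_le_right _ _) (min_le_right _ _)
      have htc : t = 3 ∨ t = v 0 ∨ t = v 0 + v 1 - s := by
        rcases min_choice 3 (min (v 0) (v 0 + v 1 - s)) with h | h
        · exact Or.inl (ht ▸ h)
        · rcases min_choice (v 0) (v 0 + v 1 - s) with h' | h'
          · exact Or.inr (Or.inl (by rw [ht, h, h']))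
          · exact Or.inr (Or.inr (by rw [ht, h, h']))
      have ht1 : 1 ≤ t := by omega
      have htz : 3 - t ≤ v 2 := by omega
      have hgen : ∀ tv zv : ℕ, tv + zv = 3 → 1 ≤ tv →
          monomial (Finsupp.single 0 tv + Finsupp.single 2 zv) (1:K) ∈ Jdl K → 
          t = tv → monomial v (coeff v f) ∈ (Jdl K) ^ (s + 1) := by
        intro tv zv htvzv htv1 hmem htt
        apply key (Finsupp.single 0 tv + Finsupp.single 2 zv) hmem
        · intro k
          fin_cases k <;> simp [Finsupp.single_apply, Finsupp.add_apply] <;> omega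
        · simp only [Finsupp.add_apply, Finsupp.single_apply]
          simp
          omega
        · simp only [Finsupp.add_apply, Finsupp.single_apply]
          simp
          omega
      have htcase : t = 1 ∨ t = 2 ∨ t = 3 := by omega
      rcases htcase with h | h | h
      · refine hgen 1 2 (by norm_num) (by norm_num) ?_ h
        rw [← gen3_eq]; exact Ideal.subset_span (by simp)
      · refine hgen 2 1 (by norm_num) (by norm_num) ?_ h
        rw [← gen2_eq]; exact Ideal.subset_span (by simp)
      · refine hgen 3 0 (by norm_num) (by norm_num) ?_ h
        have : Finsupp.single (0 : Fin 3) 3 + Finsupp.single 2 0 = Finsupp.single 0 3 := by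
          simp
        rw [this, ← gen1_eq]; exact Ideal.subset_span (by simp)

lemma mem_Jdl_pow_iff (s : ℕ) (f : R) :
    f ∈ (Jdl K) ^ s ↔ ∀ e ∈ f.support, s ≤ e 0 + e 1 ∧ 3 * s ≤ e 0 + e 2 :=
  ⟨forall_of_mem_Jdl_pow s f, mem_Jdl_pow_of_forall s f⟩



lemma mul_monomial_mem_Jdl_pow_iff (s : ℕ) (d : Fin 3 →₀ ℕ) (r : R) :
    r * monomial d 1 ∈ (Jdl K) ^ s ↔
      ∀ e ∈ r.support,
        s ≤ e 0 + d 0 + (e 1 + d 1) ∧ 3 * s ≤ e 0 + d 0 + (e 2 + d 2) := by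
  rw [mem_Jdl_pow_iff]
  constructor
  · intro H e he
    have hmem : e + d ∈ (r * monomial d 1).support := by
      rw [mem_support_iff, coeff_mul_monomial, mul_one]
      exact mem_support_iff.mp he
    have := H _ hmem
    simp only [Finsupp.add_apply] at this
    omega
  · intro H e' he'
    have hc := mem_support_iff.mp he'
    rw [coeff_mul_monomial'] at hc
    by_cases hle : d ≤ e'
    · rw [if_pos hle, mul_one] at hc
      have hsupp : e' - d ∈ r.support := mem_support_iff.mpr hc
      have := H _ hsupp
      simp only [Finsupp.tsub_apply] at this
      have h0 := Finsupp.le_def.mp hle 0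
      have h1 := Finsupp.le_def.mp hle 1
      have h2 := Finsupp.le_def.mp hle 2
      omega
    · rw [if_neg hle] at hc
      exact absurd rfl hc

lemma ann_wA (s : ℕ) (hs : 1 ≤ s) (r : R) :
    r * monomial (Finsupp.single 0 (s - 1) + Finsupp.single 2 (3 * s)) 1 ∈ (Jdl K) ^ s ↔
      r ∈ Ideal.span {(X 0 : R), X 1} := by
  rw [mul_monomial_mem_Jdl_pow_iff]
  rw [show Ideal.span {(X 0 : R), X 1} = (Ideal.span {(X 0 : R), X 1}) ^ 1 by rw [pow_one]]
  rw [mem_span_pair_pow_iff (by decide)]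
  have hd0 : ((Finsupp.single 0 (s - 1) + Finsupp.single 2 (3 * s) : Fin 3 →₀ ℕ)) 0 = s - 1 := by
    simp [Finsupp.single_apply]
  have hd1 : ((Finsupp.single 0 (s - 1) + Finsupp.single 2 (3 * s) : Fin 3 →₀ ℕ)) 1 = 0 := by
    simp [Finsupp.single_apply]
  have hd2 : ((Finsupp.single 0 (s - 1) + Finsupp.single 2 (3 * s) : Fin 3 →₀ ℕ)) 2 = 3 * s := by
    simp [Finsupp.single_apply]
  rw [hd0, hd1, hd2]
  constructor
  · intro H e he; have := H e he; omega
  · intro H e he; have := H e he; omega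

lemma wA_not_mem (s : ℕ) (hs : 1 ≤ s) :
    (monomial (Finsupp.single 0 (s - 1) + Finsupp.single 2 (3 * s)) (1:K)) ∉ (Jdl K) ^ s := by
  classical
  rw [mem_Jdl_pow_iff]
  intro H
  have hmem : Finsupp.single (0:Fin 3) (s - 1) + Finsupp.single 2 (3 * s) ∈
      (monomial (Finsupp.single (0:Fin 3) (s - 1) + Finsupp.single 2 (3 * s)) (1:K)).support := by
    rw [support_monomial, if_neg one_ne_zero]; exact Finset.mem_singleton_self _
  have := (H _ hmem).1
  have hd0 : ((Finsupp.single 0 (s - 1) + Finsupp.single 2 (3 * s) : Fin 3 →₀ ℕ)) 0 = s - 1 := by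
    simp [Finsupp.single_apply]
  have hd1 : ((Finsupp.single 0 (s - 1) + Finsupp.single 2 (3 * s) : Fin 3 →₀ ℕ)) 1 = 0 := by
    simp [Finsupp.single_apply]
  rw [hd0, hd1] at this
  omega

lemma ann_wB (s : ℕ) (hs : 1 ≤ s) (r : R) :
    r * monomial (Finsupp.single 1 s + Finsupp.single 2 (3 * s - 1)) 1 ∈ (Jdl K) ^ s ↔
      r ∈ Ideal.span {(X 0 : R), X 2} := by
  rw [mul_monomial_mem_Jdl_pow_iff]
  rw [show Ideal.span {(X 0 : R), X 2} = (Ideal.span {(X 0 : R), X 2}) ^ 1 by rw [pow_one]]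
  rw [mem_span_pair_pow_iff (by decide)]
  have hd0 : ((Finsupp.single 1 s + Finsupp.single 2 (3 * s - 1) : Fin 3 →₀ ℕ)) 0 = 0 := by
    simp [Finsupp.single_apply]
  have hd1 : ((Finsupp.single 1 s + Finsupp.single 2 (3 * s - 1) : Fin 3 →₀ ℕ)) 1 = s := by
    simp [Finsupp.single_apply]
  have hd2 : ((Finsupp.single 1 s + Finsupp.single 2 (3 * s - 1) : Fin 3 →₀ ℕ)) 2 = 3 * s - 1 := by
    simp [Finsupp.single_apply]
  rw [hd0, hd1, hd2]
  constructor
  · intro H e he; have := H e he; omega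
  · intro H e he; have := H e he; omega

lemma wB_not_mem (s : ℕ) (hs : 1 ≤ s) :
    (monomial (Finsupp.single 1 s + Finsupp.single 2 (3 * s - 1)) (1:K)) ∉ (Jdl K) ^ s := by
  classical
  rw [mem_Jdl_pow_iff]
  intro H
  have hmem : Finsupp.single (1:Fin 3) s + Finsupp.single 2 (3 * s - 1) ∈
      (monomial (Finsupp.single (1:Fin 3) s + Finsupp.single 2 (3 * s - 1)) (1:K)).support := by
    rw [support_monomial, if_neg one_ne_zero]; exact Finset.mem_singleton_self _
  have := (H _ hmem).2
  have hd0 : ((Finsupp.single 1 s + Finsupp.single 2 (3 * s - 1) : Fin 3 →₀ ℕ)) 0 = 0 := by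
    simp [Finsupp.single_apply]
  have hd2 : ((Finsupp.single 1 s + Finsupp.single 2 (3 * s - 1) : Fin 3 →₀ ℕ)) 2 = 3 * s - 1 := by
    simp [Finsupp.single_apply]
  rw [hd0, hd2] at this
  omega

lemma mem_Jdl_pow_iff' (s : ℕ) (f : R) :
    f ∈ (Jdl K) ^ s ↔
      f ∈ (Ideal.span {(X 0 : R), X 1}) ^ s ∧ f ∈ (Ideal.span {(X 0 : R), X 2}) ^ (3 * s) := by
  rw [mem_Jdl_pow_iff, mem_span_pair_pow_iff (by decide), mem_span_pair_pow_iff (by decide)]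
  exact ⟨fun h => ⟨fun e he => (h e he).1, fun e he => (h e he).2⟩,
    fun h e he => ⟨h.1 e he, h.2 e he⟩⟩

lemma smul_mk (I : Ideal R) (r f : R) :
    r • (Ideal.Quotient.mk I f) = Ideal.Quotient.mk I (r * f) := rfl

lemma main (s : ℕ) (hs : 1 ≤ s) :
    associatedPrimes (MvPolynomial (Fin 3) K) ((MvPolynomial (Fin 3) K) ⧸ (Jdl K) ^ s) =
      {Ideal.span {(X 0 : MvPolynomial (Fin 3) K), X 1},
        Ideal.span {(X 0 : MvPolynomial (Fin 3) K), X 2}} := by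
  ext P
  simp only [Set.mem_insert_iff, Set.mem_singleton_iff]
  constructor
  · intro hPmem
    obtain ⟨hP, x, hx⟩ := isAssociatedPrime_iff.mp hPmem
    obtain ⟨f, rfl⟩ := Ideal.Quotient.mk_surjective x
    have hPiff : ∀ r : R, r ∈ P ↔ r * f ∈ (Jdl K) ^ s := by
      intro r
      rw [hx, Submodule.mem_colon_singleton, Submodule.mem_bot, smul_mk,
        Ideal.Quotient.eq_zero_iff_mem]
    have hfJ : f ∉ (Jdl K) ^ s := by
      intro hf
      have : (1 : R) ∈ P := (hPiff 1).mpr (by rwa [one_mul])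
      exact hP.ne_top (Ideal.eq_top_iff_one P |>.mpr this)
    by_cases hcase : ∃ r : R, r ∉ P ∧ r * f ∈ (Ideal.span {(X 0 : R), X 2}) ^ (3 * s)
    · left
      obtain ⟨r, hrP, hrB⟩ := hcase
      have hgA : r * f ∉ (Ideal.span {(X 0 : R), X 1}) ^ s := by
        intro h
        exact hrP ((hPiff r).mpr ((mem_Jdl_pow_iff' s _).mpr ⟨h, hrB⟩))
      refine colon_span_pair_pow (by decide) hs hgA hP ?_
      intro q
      constructor
      · intro hq
        have hq' : q * r ∈ P := by
          rw [mul_comm]; exact Ideal.mul_mem_left _ r hq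
        have := (hPiff (q * r)).mp hq'
        have hA := ((mem_Jdl_pow_iff' s _).mp this).1
        rw [show q * (r * f) = q * r * f by ring]
        exact hA
      · intro hq
        have hB : q * (r * f) ∈ (Ideal.span {(X 0 : R), X 2}) ^ (3 * s) :=
          Ideal.mul_mem_left _ q hrB
        have hJ : q * r * f ∈ (Jdl K) ^ s := by
          rw [show q * r * f = q * (r * f) by ring]
          exact (mem_Jdl_pow_iff' s _).mpr ⟨hq, hB⟩
        have := (hPiff (q * r)).mpr hJ
        rcases hP.mem_or_mem this with h | h
        · exact h
        · exact absurd h hrP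
    · right
      push_neg at hcase
      have hfB : f ∉ (Ideal.span {(X 0 : R), X 2}) ^ (3 * s) := by
        intro hf
        have h1P : (1 : R) ∉ P := fun h => hP.ne_top (Ideal.eq_top_iff_one P |>.mpr h)
        exact hcase 1 h1P (by rwa [one_mul]) 
      refine colon_span_pair_pow (by decide) (by omega) hfB hP ?_
      intro q
      constructor
      · intro hq
        exact ((mem_Jdl_pow_iff' s _).mp ((hPiff q).mp hq)).2
      · intro hq
        by_contra hqP
        exact hcase q hqP hq
  · rintro (rfl | rfl)
    · refine isAssociatedPrime_iff.mpr ⟨span_pair_isPrime (by decide), Ideal.Quotient.mk _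
        (monomial (Finsupp.single 0 (s - 1) + Finsupp.single 2 (3 * s)) (1:K)), ?_⟩
      ext r
      rw [Submodule.mem_colon_singleton, Submodule.mem_bot, smul_mk, Ideal.Quotient.eq_zero_iff_mem,
        ann_wA s hs]
    · refine isAssociatedPrime_iff.mpr ⟨span_pair_isPrime (by decide), Ideal.Quotient.mk _
        (monomial (Finsupp.single 1 s + Finsupp.single 2 (3 * s - 1)) (1:K)), ?_⟩
      ext r
      rw [Submodule.mem_colon_singleton, Submodule.mem_bot, smul_mk, Ideal.Quotient.eq_zero_iff_mem,
        ann_wB s hs]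

end NTFAux

/-- An ideal is normally torsion-free if `Ass(R/I^k) ⊆ Ass(R/I)` for all `k ≥ 1`. -/
def IsNTF {R : Type*} [CommRing R] (I : Ideal R) : Prop :=
  ∀ k : ℕ, 1 ≤ k →
    associatedPrimes R (R ⧸ I ^ k) ⊆ associatedPrimes R (R ⧸ I)

/-- `x = X 0`, `y = X 1`, `z = X 2` in `R = K[x,y,z]`. -/
theorem stmt_17 {K : Type*} [Field K] :
    (∀ s : ℕ, 1 ≤ s →
      associatedPrimes (MvPolynomial (Fin 3) K)
          ((MvPolynomial (Fin 3) K) ⧸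
            (Ideal.span {(X 0 : MvPolynomial (Fin 3) K) ^ 3, X 0 ^ 2 * X 2,
              X 0 * X 2 ^ 2, X 1 * X 2 ^ 3}) ^ s) =
        {Ideal.span {(X 0 : MvPolynomial (Fin 3) K), X 1},
          Ideal.span {(X 0 : MvPolynomial (Fin 3) K), X 2}}) ∧
    IsNTF (Ideal.span {(X 0 : MvPolynomial (Fin 3) K) ^ 3, X 0 ^ 2 * X 2,
      X 0 * X 2 ^ 2, X 1 * X 2 ^ 3}) := by
  constructor
  · intro s hs
    exact NTFAux.main s hs
  · intro k hk
    have h1 := NTFAux.main (K := K) 1 le_rfl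
    rw [pow_one] at h1
    have hk' := NTFAux.main (K := K) k hk
    show associatedPrimes (MvPolynomial (Fin 3) K)
        (MvPolynomial (Fin 3) K ⧸ (NTFAux.Jdl K) ^ k) ⊆
      associatedPrimes (MvPolynomial (Fin 3) K) (MvPolynomial (Fin 3) K ⧸ NTFAux.Jdl K)
    rw [hk', h1]
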